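/- Let V₁ ⊆ ℂ be an open set, let φ, α : V₁ → ℝ be C² functions with Δφ ≤ 0 (φ superharmonic), Δα ≥ 0 (α subharmonic), and φ(z) > α(z) for all z ∈ V₁. For each integer n ≥ 2 define λ_n(z) = −log( (π/(n−1)) (e^{(2n−2)φ(z)} − e^{(2n−2)α(z)}) ). Then λ_n is C² and Δλ_n ≥ 0 on V₁, i.e., λ_n is subharmonic on V₁. -/

import Mathlib

set_option maxHeartbeats 1000000

/-- The Laplacian `Δf = ∂²f/∂x² + ∂²f/∂y²` of `f : ℂ → ℝ`, expressed via the second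
(iterated Fréchet) derivative in the directions `1` and `i`. -/
noncomputable def lap (f : ℂ → ℝ) (z : ℂ) : ℝ :=
  iteratedFDeriv ℝ 2 f z ![1, 1] + iteratedFDeriv ℝ 2 f z ![Complex.I, Complex.I]

private theorem aux (V₁ : Set ℂ) (hV₁ : IsOpen V₁) (φ α : ℂ → ℝ)
    (hφ : ContDiffOn ℝ 2 φ V₁) (hα : ContDiffOn ℝ 2 α V₁)
    (hφ_super : ∀ z ∈ V₁, lap φ z ≤ 0) (hα_sub : ∀ z ∈ V₁, 0 ≤ lap α z)
    (hαφ : ∀ z ∈ V₁, α z < φ z) (c k : ℝ) (hc : 0 < c) (hk : 0 < k) :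
    ContDiffOn ℝ 2 (fun z => -Real.log (c * (Real.exp (k * φ z) - Real.exp (k * α z)))) V₁ ∧
    ∀ z ∈ V₁, 0 ≤ lap (fun z => -Real.log (c * (Real.exp (k * φ z) - Real.exp (k * α z)))) z := by
  have hgpos : ∀ w ∈ V₁, 0 < c * (Real.exp (k * φ w) - Real.exp (k * α w)) := by
    intro w hw
    have h1 : Real.exp (k * α w) < Real.exp (k * φ w) :=
      Real.exp_lt_exp.2 (by nlinarith [hαφ w hw])
    nlinarith
  constructor
  · have hgC : ContDiffOn ℝ 2 (fun z => c * (Real.exp (k * φ z) - Real.exp (k * α z))) V₁ :=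
      contDiffOn_const.mul
        ((Real.contDiff_exp.comp_contDiffOn (contDiffOn_const.mul hφ)).sub
          (Real.contDiff_exp.comp_contDiffOn (contDiffOn_const.mul hα)))
    exact (hgC.log fun x hx => (hgpos x hx).ne').neg
  · intro z hz
    have hVz := hV₁.mem_nhds hz
    have hφd : ∀ w ∈ V₁, HasFDerivAt φ (fderiv ℝ φ w) w := fun w hw =>
      ((hφ.differentiableOn (by norm_num)).differentiableAt (hV₁.mem_nhds hw)).hasFDerivAt
    have hαd : ∀ w ∈ V₁, HasFDerivAt α (fderiv ℝ α w) w := fun w hw =>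
      ((hα.differentiableOn (by norm_num)).differentiableAt (hV₁.mem_nhds hw)).hasFDerivAt
    have hgd : ∀ w ∈ V₁,
        HasFDerivAt (fun z => c * (Real.exp (k * φ z) - Real.exp (k * α z)))
          (c • (Real.exp (k * φ w) • (k • fderiv ℝ φ w) -
                Real.exp (k * α w) • (k • fderiv ℝ α w))) w := fun w hw =>
      ((((hφd w hw).const_mul k).exp.sub (((hαd w hw).const_mul k).exp)).const_mul c)
    have hfd : ∀ w ∈ V₁,
        HasFDerivAt (fun z => -Real.log (c * (Real.exp (k * φ z) - Real.exp (k * α z))))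
          ((-(c * (Real.exp (k * φ w) - Real.exp (k * α w)))⁻¹) •
            (c • (Real.exp (k * φ w) • (k • fderiv ℝ φ w) -
                  Real.exp (k * α w) • (k • fderiv ℝ α w)))) w := by
      intro w hw
      have h := ((hgd w hw).log (hgpos w hw).ne').neg
      simpa [neg_smul, Pi.neg_def] using h
    have hφ1 : ContDiffOn ℝ 1 (fderiv ℝ φ) V₁ := hφ.fderiv_of_isOpen hV₁ (by norm_num)
    have hα1 : ContDiffOn ℝ 1 (fderiv ℝ α) V₁ := hα.fderiv_of_isOpen hV₁ (by norm_num)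
    have hud : HasFDerivAt (fderiv ℝ φ) (fderiv ℝ (fderiv ℝ φ) z) z :=
      ((hφ1.differentiableOn (by norm_num)).differentiableAt hVz).hasFDerivAt
    have hvd : HasFDerivAt (fderiv ℝ α) (fderiv ℝ (fderiv ℝ α) z) z :=
      ((hα1.differentiableOn (by norm_num)).differentiableAt hVz).hasFDerivAt
    set E := Real.exp (k * φ z) with hE
    set F := Real.exp (k * α z) with hF
    set U := fderiv ℝ φ z with hU
    set V := fderiv ℝ α z with hV
    set U2 := fderiv ℝ (fderiv ℝ φ) z with hU2
    set V2 := fderiv ℝ (fderiv ℝ α) z with hV2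
    have hAd : HasFDerivAt (fun w => Real.exp (k * φ w) • (k • fderiv ℝ φ w))
        (E • (k • U2) + (E • (k • U)).smulRight (k • U)) z :=
      HasFDerivAt.smul (((hφd z hz).const_mul k).exp) (hud.const_smul k)
    have hBd : HasFDerivAt (fun w => Real.exp (k * α w) • (k • fderiv ℝ α w))
        (F • (k • V2) + (F • (k • V)).smulRight (k • V)) z :=
      HasFDerivAt.smul (((hαd z hz).const_mul k).exp) (hvd.const_smul k)
    have hDd : HasFDerivAt (fun w => c • (Real.exp (k * φ w) • (k • fderiv ℝ φ w) -
                  Real.exp (k * α w) • (k • fderiv ℝ α w)))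
        (c • ((E • (k • U2) + (E • (k • U)).smulRight (k • U)) -
              (F • (k • V2) + (F • (k • V)).smulRight (k • V)))) z :=
      (hAd.sub hBd).const_smul c
    set gz := c * (E - F) with hgz
    have hgzpos : 0 < gz := hgpos z hz
    have hscd : HasFDerivAt (fun w => -(c * (Real.exp (k * φ w) - Real.exp (k * α w)))⁻¹)
        (-((-(gz ^ 2)⁻¹) • (c • (E • (k • U) - F • (k • V))))) z := by
      have h1 : HasFDerivAt (fun w => (c * (Real.exp (k * φ w) - Real.exp (k * α w)))⁻¹)
          ((-(gz ^ 2)⁻¹) • (c • (E • (k • U) - F • (k • V)))) z := by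
        exact (hasDerivAt_inv hgzpos.ne').comp_hasFDerivAt z (hgd z hz)
      exact h1.neg
    have hLd : HasFDerivAt (fun w => (-(c * (Real.exp (k * φ w) - Real.exp (k * α w)))⁻¹) •
          (c • (Real.exp (k * φ w) • (k • fderiv ℝ φ w) -
                Real.exp (k * α w) • (k • fderiv ℝ α w))))
        ((-gz⁻¹) • (c • ((E • (k • U2) + (E • (k • U)).smulRight (k • U)) -
              (F • (k • V2) + (F • (k • V)).smulRight (k • V)))) +
         (-((-(gz ^ 2)⁻¹) • (c • (E • (k • U) - F • (k • V))))).smulRight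
           (c • (E • (k • U) - F • (k • V)))) z := by
      exact HasFDerivAt.smul hscd hDd
    have hev : (fderiv ℝ (fun z => -Real.log (c * (Real.exp (k * φ z) - Real.exp (k * α z)))))
        =ᶠ[nhds z] fun w => (-(c * (Real.exp (k * φ w) - Real.exp (k * α w)))⁻¹) •
          (c • (Real.exp (k * φ w) • (k • fderiv ℝ φ w) -
                Real.exp (k * α w) • (k • fderiv ℝ α w))) := by
      filter_upwards [hVz] with w hw
      exact (hfd w hw).fderiv
    have h2f : fderiv ℝ (fderiv ℝ (fun z => -Real.log (c * (Real.exp (k * φ z) - Real.exp (k * α z))))) z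
        = ((-gz⁻¹) • (c • ((E • (k • U2) + (E • (k • U)).smulRight (k • U)) -
              (F • (k • V2) + (F • (k • V)).smulRight (k • V)))) +
         (-((-(gz ^ 2)⁻¹) • (c • (E • (k • U) - F • (k • V))))).smulRight
           (c • (E • (k • U) - F • (k • V)))) := hev.fderiv_eq.trans hLd.fderiv
    have hEpos : (0:ℝ) < E := Real.exp_pos _
    have hFpos : (0:ℝ) < F := Real.exp_pos _
    have hEF : F < E := Real.exp_lt_exp.2 (by nlinarith [hαφ z hz])
    have hlapφ : lap φ z = (U2 1) 1 + (U2 Complex.I) Complex.I := by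
      simp only [lap, iteratedFDeriv_two_apply, Matrix.cons_val_zero, Matrix.cons_val_one,
        Matrix.head_cons, ← hU2]
    have hlapα : lap α z = (V2 1) 1 + (V2 Complex.I) Complex.I := by
      simp only [lap, iteratedFDeriv_two_apply, Matrix.cons_val_zero, Matrix.cons_val_one,
        Matrix.head_cons, ← hV2]
    have hA' : (U2 1) 1 + (U2 Complex.I) Complex.I ≤ 0 := hlapφ ▸ hφ_super z hz
    have hB' : 0 ≤ (V2 1) 1 + (V2 Complex.I) Complex.I := hlapα ▸ hα_sub z hz
    simp only [lap, iteratedFDeriv_two_apply, Matrix.cons_val_zero, Matrix.cons_val_one,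
      Matrix.head_cons, h2f, ContinuousLinearMap.add_apply, ContinuousLinearMap.smul_apply,
      ContinuousLinearMap.sub_apply, ContinuousLinearMap.smulRight_apply,
      ContinuousLinearMap.neg_apply, smul_eq_mul]
    have hgzne : gz ≠ 0 := hgzpos.ne'
    rw [show -gz⁻¹ * (c * (E * (k * (U2 1) 1) + E * (k * U 1) * (k * U 1) - (F * (k * (V2 1) 1) + F * (k * V 1) * (k * V 1)))) +
        -(-(gz ^ 2)⁻¹ * (c * (E * (k * U 1) - F * (k * V 1)))) * (c * (E * (k * U 1) - F * (k * V 1))) +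
      (-gz⁻¹ *
          (c *
            (E * (k * (U2 Complex.I) Complex.I) + E * (k * U Complex.I) * (k * U Complex.I) -
              (F * (k * (V2 Complex.I) Complex.I) + F * (k * V Complex.I) * (k * V Complex.I)))) +
        -(-(gz ^ 2)⁻¹ * (c * (E * (k * U Complex.I) - F * (k * V Complex.I)))) *
          (c * (E * (k * U Complex.I) - F * (k * V Complex.I))))
      = ((c * (E * (k * U 1) - F * (k * V 1)))^2 + (c * (E * (k * U Complex.I) - F * (k * V Complex.I)))^2
          - gz * (c * (E * (k * (U2 1) 1) + E * (k * U 1) * (k * U 1) - (F * (k * (V2 1) 1) + F * (k * V 1) * (k * V 1)))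
                 + c * (E * (k * (U2 Complex.I) Complex.I) + E * (k * U Complex.I) * (k * U Complex.I) -
                     (F * (k * (V2 Complex.I) Complex.I) + F * (k * V Complex.I) * (k * V Complex.I))))) / gz ^ 2
      from by field_simp; ring]
    apply div_nonneg _ (by positivity)
    clear hev h2f hLd hscd hDd hAd hBd hfd hgd hud hvd hφd hαd hφ1 hα1 hlapφ hlapα hgpos hφ hα hφ_super hα_sub hαφ
    clear_value E F U V U2 V2 gz
    rw [hgz]
    set p1 := U 1 with hp1
    set p2 := U Complex.I with hp2
    set q1 := V 1 with hq1
    set q2 := V Complex.I with hq2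
    set a1 := (U2 1) 1 with ha1
    set a2 := (U2 Complex.I) Complex.I with ha2
    set b1 := (V2 1) 1 with hb1
    set b2 := (V2 Complex.I) Complex.I with hb2
    clear_value p1 p2 q1 q2 a1 a2 b1 b2
    have tE : E * (a1 + a2) ≤ 0 := by nlinarith [mul_nonneg hEpos.le (neg_nonneg.2 hA')]
    have tF : 0 ≤ F * (b1 + b2) := mul_nonneg hFpos.le hB'
    have h1 : (0:ℝ) ≤ c^2*k^2*(E*F)*((p1 - q1)^2 + (p2 - q2)^2) := by positivity
    have hck : (0:ℝ) ≤ c^2*k := by positivity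
    have hEF2 : (0:ℝ) ≤ E - F := by linarith
    have h2 : (0:ℝ) ≤ c^2*k*(E-F)*(F*(b1 + b2) - E*(a1 + a2)) :=
      mul_nonneg (mul_nonneg hck hEF2) (by linarith)
    linarith [add_nonneg h1 h2]

/-- If `φ` is C² superharmonic, `α` is C² subharmonic on an open set
`V₁` with `φ > α`, then for every integer `n ≥ 2` the function
`λ_n(z) = -log((π/(n-1)) (e^{(2n-2)φ(z)} - e^{(2n-2)α(z)}))` is C² and subharmonic on `V₁`. -/
theorem lambda_n_subharmonic (V₁ : Set ℂ) (hV₁ : IsOpen V₁) (φ α : ℂ → ℝ)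
    (hφ : ContDiffOn ℝ 2 φ V₁) (hα : ContDiffOn ℝ 2 α V₁)
    (hφ_super : ∀ z ∈ V₁, lap φ z ≤ 0) (hα_sub : ∀ z ∈ V₁, 0 ≤ lap α z)
    (hαφ : ∀ z ∈ V₁, α z < φ z) (n : ℤ) (hn : 2 ≤ n) :
    ContDiffOn ℝ 2
      (fun z => -Real.log (Real.pi / ((n : ℝ) - 1) *
        (Real.exp ((2 * (n : ℝ) - 2) * φ z) - Real.exp ((2 * (n : ℝ) - 2) * α z)))) V₁ ∧
    ∀ z ∈ V₁,
      0 ≤ lap (fun z => -Real.log (Real.pi / ((n : ℝ) - 1) *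
        (Real.exp ((2 * (n : ℝ) - 2) * φ z) - Real.exp ((2 * (n : ℝ) - 2) * α z)))) z := by
  have hn' : (2:ℝ) ≤ (n:ℝ) := by exact_mod_cast hn
  exact aux V₁ hV₁ φ α hφ hα hφ_super hα_sub hαφ (Real.pi / ((n : ℝ) - 1)) (2 * (n : ℝ) - 2)
    (div_pos Real.pi_pos (by linarith)) (by linarith)
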